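/- Let d ≥ 2 be an integer and let c : ℕ → ℂ be a higher order oscillating sequence of order d (stronger version). Let A ∈ GL(d, ℤ) be a matrix all of whose complex eigenvalues equal 1, or all of whose complex eigenvalues equal -1 (equivalently, the characteristic polynomial of A is (X-1)^d or (X+1)^d), and let a ∈ 𝕋^d = ℝ^d/ℤ^d with a ≠ 0. Define the affine distal flow T : 𝕋^d → 𝕋^d by T(x) = Ax + a. Then c is linearly disjoint from T: for every continuous function f : 𝕋^d → ℂ and every x ∈ 𝕋^d, (1/N) ∑_{n=1}^{N} c_n · f(Tⁿ x) → 0 as N → ∞. -/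

import Mathlib

open Filter Polynomial

noncomputable section

/-- The `d`-torus `ℝ^d/ℤ^d`, as a product of copies of `ℝ/ℤ`. -/
abbrev Torus (d : ℕ) := Fin d → AddCircle (1 : ℝ)

/-- The affine map `x ↦ A x + a` on the `d`-torus, for an integer matrix `A`. -/
def torusAffine {d : ℕ} (A : Matrix (Fin d) (Fin d) ℤ) (a : Torus d) (x : Torus d) : Torus d :=
  fun i => (∑ j, A i j • x j) + a i

/-- `c` is a higher order oscillating sequence of order `m` (stronger version): for some
`λ > 1` the averages of `|c n|^λ` converge to a finite limit, and for every real-coefficient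
polynomial `P` of degree at most `m` the averages of `c n · e^{2πi P(n)}` tend to `0`. -/
def HigherOrderOscillating (c : ℕ → ℂ) (m : ℕ) : Prop :=
  (∃ lam : ℝ, 1 < lam ∧ ∃ K : ℝ,
    Tendsto (fun N : ℕ => (1 / N : ℝ) * ∑ n ∈ Finset.Icc 1 N, ‖c n‖ ^ lam) atTop (nhds K)) ∧
  ∀ P : Polynomial ℝ, P.degree ≤ m →
    Tendsto (fun N : ℕ => (1 / N : ℂ) * ∑ n ∈ Finset.Icc 1 N,
      c n * Complex.exp (2 * Real.pi * Complex.I * (P.eval (n : ℝ)))) atTop (nhds 0)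

/-- `c` is linearly disjoint from the flow `T`: for every continuous `f : X → ℂ` and every
`x ∈ X`, `(1/N) ∑_{n=1}^N c n · f(Tⁿ x) → 0` as `N → ∞`. -/
def LinearlyDisjoint {X : Type*} [TopologicalSpace X] (c : ℕ → ℂ) (T : X → X) : Prop :=
  ∀ f : X → ℂ, Continuous f → ∀ x : X,
    Tendsto (fun N : ℕ => (1 / N : ℂ) * ∑ n ∈ Finset.Icc 1 N, c n * f (T^[n] x)) atTop (nhds 0)

section Auxiliary

/-- binomial coefficient polynomial -/
def binomPoly (j : ℕ) : Polynomial ℝ := Polynomial.C ((j.factorial : ℝ)⁻¹) * descPochhammer ℝ j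

lemma binomPoly_eval (j n : ℕ) : (binomPoly j).eval (n : ℝ) = n.choose j := by
  rw [binomPoly, eval_mul, eval_C, descPochhammer_eval_eq_descFactorial,
    Nat.descFactorial_eq_factorial_mul_choose]
  push_cast
  rw [← mul_assoc, inv_mul_cancel₀ (by exact_mod_cast j.factorial_ne_zero), one_mul]

lemma binomPoly_natDegree_le (j : ℕ) : (binomPoly j).natDegree ≤ j := by
  refine (natDegree_mul_le).trans ?_
  simp [descPochhammer_natDegree]

lemma sum_range_choose_eq (k m : ℕ) : ∑ j ∈ Finset.range m, j.choose k = m.choose (k + 1) := by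
  induction m with
  | zero => simp
  | succ m ih => rw [Finset.sum_range_succ, ih, Nat.choose_succ_succ, add_comm]

lemma pow_one_add_nilpotent {R : Type*} [Ring R] (q : R) (e : ℕ) (he : q ^ e = 0) (n : ℕ) :
    (1 + q) ^ n = ∑ j ∈ Finset.range e, (n.choose j : R) * q ^ j := by
  have hc : Commute q (1 : R) := Commute.one_right q
  have h1 : (q + 1) ^ n = ∑ j ∈ Finset.range (n + 1), q ^ j * (n.choose j : R) :=
    by simpa using hc.add_pow n
  rw [add_comm] at h1
  have hzero : ∀ j ∈ Finset.range (max (n+1) e), j ∉ Finset.range (n+1) → q ^ j * (n.choose j : R) = 0 := by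
    intro j _ hj
    simp only [Finset.mem_range, not_lt] at hj
    rw [Nat.choose_eq_zero_of_lt hj]
    simp
  have hzero2 : ∀ j ∈ Finset.range (max (n+1) e), j ∉ Finset.range e → q ^ j * (n.choose j : R) = 0 := by
    intro j _ hj
    simp only [Finset.mem_range, not_lt] at hj
    have : q ^ j = 0 := by
      rw [← Nat.sub_add_cancel hj, pow_add, he, mul_zero]
    simp [this]
  calc (1 + q) ^ n = ∑ j ∈ Finset.range (n+1), q ^ j * (n.choose j : R) := h1
    _ = ∑ j ∈ Finset.range (max (n+1) e), q ^ j * (n.choose j : R) :=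
        Finset.sum_subset (Finset.range_subset_range.2 (le_max_left _ _)) hzero
    _ = ∑ j ∈ Finset.range e, q ^ j * (n.choose j : R) :=
        (Finset.sum_subset (Finset.range_subset_range.2 (le_max_right _ _)) hzero2).symm
    _ = ∑ j ∈ Finset.range e, (n.choose j : R) * q ^ j := by
        refine Finset.sum_congr rfl fun j _ => ?_
        exact (Nat.cast_commute _ _).symm.eq

lemma affine_orbit_poly {d : ℕ} (hd : 1 ≤ d) (B : Matrix (Fin d) (Fin d) ℝ)
    (hB : (B - 1) ^ d = 0) (v : ℕ → Fin d → ℝ) (b : Fin d → ℝ)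
    (hrec : ∀ m, v (m + 1) = B.mulVec (v m) + b) (i : Fin d) :
    ∃ p : Polynomial ℝ, p.natDegree ≤ d ∧ ∀ m : ℕ, v m i = p.eval (m : ℝ) := by
  set N := B - 1 with hN
  have hpow : ∀ m : ℕ, B ^ m = ∑ j ∈ Finset.range d, (m.choose j : ℝ) • N ^ j := by
    intro m
    have hB1 : B = 1 + N := by rw [hN]; abel
    rw [hB1, pow_one_add_nilpotent N d hB m]
    refine Finset.sum_congr rfl fun j _ => ?_
    rw [← nsmul_eq_mul, ← Nat.cast_smul_eq_nsmul ℝ]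
  -- sum of powers
  have hsum : ∀ m : ℕ, (∑ j ∈ Finset.range m, B ^ j)
      = ∑ k ∈ Finset.range d, (m.choose (k+1) : ℝ) • N ^ k := by
    intro m
    calc (∑ j ∈ Finset.range m, B ^ j)
        = ∑ j ∈ Finset.range m, ∑ k ∈ Finset.range d, (j.choose k : ℝ) • N ^ k := by
          refine Finset.sum_congr rfl fun j _ => hpow j
      _ = ∑ k ∈ Finset.range d, (∑ j ∈ Finset.range m, (j.choose k : ℝ)) • N ^ k := by
          rw [Finset.sum_comm]
          refine Finset.sum_congr rfl fun k _ => ?_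
          rw [Finset.sum_smul]
      _ = ∑ k ∈ Finset.range d, (m.choose (k+1) : ℝ) • N ^ k := by
          refine Finset.sum_congr rfl fun k _ => ?_
          rw [← Nat.cast_sum, sum_range_choose_eq]
  -- closed form for v m
  have hv : ∀ m : ℕ, v m = (B ^ m).mulVec (v 0) + (∑ j ∈ Finset.range m, B ^ j).mulVec b := by
    intro m
    induction m with
    | zero => simp
    | succ m ih =>
      rw [hrec, ih, Matrix.mulVec_add, Matrix.mulVec_mulVec, ← pow_succ',
        geom_sum_succ, Matrix.add_mulVec, Matrix.one_mulVec, ← Matrix.mulVec_mulVec, add_assoc]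
  -- coordinates
  refine ⟨(∑ j ∈ Finset.range d, Polynomial.C ((N ^ j).mulVec (v 0) i) * binomPoly j)
      + ∑ k ∈ Finset.range d, Polynomial.C ((N ^ k).mulVec b i) * binomPoly (k+1), ?_, ?_⟩
  · refine natDegree_add_le_of_degree_le ?_ ?_
    · refine natDegree_sum_le_of_forall_le _ _ fun j hj => ?_
      refine (natDegree_mul_le).trans ?_
      have := binomPoly_natDegree_le j
      have hjd : j ≤ d := le_of_lt (Finset.mem_range.mp hj)
      simp only [natDegree_C, zero_add]
      omega
    · refine natDegree_sum_le_of_forall_le _ _ fun k hk => ?_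
      refine (natDegree_mul_le).trans ?_
      have := binomPoly_natDegree_le (k+1)
      have hkd : k + 1 ≤ d := Finset.mem_range.mp hk
      simp only [natDegree_C, zero_add]
      omega
  · intro m
    rw [hv m, hpow m, hsum m]
    simp only [eval_add, eval_finset_sum, eval_mul, eval_C, binomPoly_eval]
    have key : ∀ (M : ℕ → Matrix (Fin d) (Fin d) ℝ) (u : Fin d → ℝ),
        ((∑ j ∈ Finset.range d, M j).mulVec u) i = ∑ j ∈ Finset.range d, (M j).mulVec u i := by
      intro M u
      simp only [Matrix.mulVec, dotProduct, Matrix.sum_apply, Finset.sum_mul]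
      exact Finset.sum_comm
    simp only [Pi.add_apply]
    rw [key, key]
    congr 1 <;>
    · refine Finset.sum_congr rfl fun j _ => ?_
      rw [Matrix.smul_mulVec, Pi.smul_apply, smul_eq_mul, mul_comm]

lemma avg_norm_bound (c : ℕ → ℂ) (lam : ℝ) (hlam : 1 < lam) (K : ℝ)
    (hK : Tendsto (fun N : ℕ => (1 / N : ℝ) * ∑ n ∈ Finset.Icc 1 N, ‖c n‖ ^ lam) atTop (nhds K)) :
    ∃ C : ℝ, 0 ≤ C ∧ ∀ N : ℕ, 1 ≤ N → (1 / N : ℝ) * ∑ n ∈ Finset.Icc 1 N, ‖c n‖ ≤ C := by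
  obtain ⟨B, hB⟩ := hK.bddAbove_range
  refine ⟨1 + max B 0, by positivity, fun N hN => ?_⟩
  have hNpos : (0 : ℝ) < N := by exact_mod_cast hN
  have hpt : ∀ n : ℕ, ‖c n‖ ≤ 1 + ‖c n‖ ^ lam := by
    intro n
    rcases le_or_gt (‖c n‖) 1 with h | h
    · have : (0:ℝ) ≤ ‖c n‖ ^ lam := Real.rpow_nonneg (norm_nonneg _) lam
      linarith
    · calc ‖c n‖ = ‖c n‖ ^ (1:ℝ) := (Real.rpow_one _).symm
        _ ≤ ‖c n‖ ^ lam := Real.rpow_le_rpow_of_exponent_le h.le hlam.le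
        _ ≤ 1 + ‖c n‖ ^ lam := by linarith
  have hsum : (1 / N : ℝ) * ∑ n ∈ Finset.Icc 1 N, ‖c n‖
      ≤ (1 / N : ℝ) * ∑ n ∈ Finset.Icc 1 N, (1 + ‖c n‖ ^ lam) := by
    refine mul_le_mul_of_nonneg_left ?_ (by positivity)
    exact Finset.sum_le_sum fun n _ => hpt n
  refine hsum.trans ?_
  rw [Finset.sum_add_distrib, mul_add, Finset.sum_const, Nat.card_Icc]
  simp only [nsmul_eq_mul, Nat.add_sub_cancel]
  have h1 : (1 / N : ℝ) * (N : ℝ) * 1 = 1 := by field_simp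
  have h2 : (1 / N : ℝ) * ∑ n ∈ Finset.Icc 1 N, ‖c n‖ ^ lam ≤ max B 0 := by
    refine le_trans (hB ⟨N, rfl⟩) (le_max_left _ _)
  have := mul_le_mul_of_nonneg_left (le_refl (1:ℝ)) (le_of_lt hNpos)
  calc (1 / N : ℝ) * ((N:ℝ) * 1) + (1 / N : ℝ) * ∑ n ∈ Finset.Icc 1 N, ‖c n‖ ^ lam
      ≤ 1 + max B 0 := by
        rw [mul_one]
        have : (1 / N : ℝ) * (N : ℝ) = 1 := by field_simp
        rw [this]
        linarith

lemma tendsto_avg_of_approx (c : ℕ → ℂ) (C : ℝ)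
    (hC : ∀ N : ℕ, 1 ≤ N → (1 / N : ℝ) * ∑ n ∈ Finset.Icc 1 N, ‖c n‖ ≤ C)
    (u : ℕ → ℂ)
    (h : ∀ ε : ℝ, 0 < ε → ∃ g : ℕ → ℂ, (∀ n, ‖u n - g n‖ ≤ ε) ∧
      Tendsto (fun N : ℕ => (1 / N : ℂ) * ∑ n ∈ Finset.Icc 1 N, c n * g n) atTop (nhds 0)) :
    Tendsto (fun N : ℕ => (1 / N : ℂ) * ∑ n ∈ Finset.Icc 1 N, c n * u n) atTop (nhds 0) := by
  rw [NormedAddCommGroup.tendsto_nhds_zero]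
  intro ε hε
  have hC0 : 0 ≤ C := le_trans (by simp) (hC 1 le_rfl)
  set δ := ε / (2 * (C + 1)) with hδ
  have hδpos : 0 < δ := by positivity
  obtain ⟨g, hg, hgt⟩ := h δ hδpos
  rw [NormedAddCommGroup.tendsto_nhds_zero] at hgt
  filter_upwards [hgt (ε / 2) (by positivity), Filter.eventually_ge_atTop 1] with N hN1 hN2
  have hNpos : (0 : ℝ) < N := by exact_mod_cast hN2
  have key : ‖(1 / N : ℂ) * ∑ n ∈ Finset.Icc 1 N, c n * u n
      - (1 / N : ℂ) * ∑ n ∈ Finset.Icc 1 N, c n * g n‖ ≤ C * δ := by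
    rw [← mul_sub, ← Finset.sum_sub_distrib]
    have : ∀ n ∈ Finset.Icc 1 N, c n * u n - c n * g n = c n * (u n - g n) := by
      intro n _; ring
    rw [Finset.sum_congr rfl this]
    rw [norm_mul]
    have h1 : ‖(1 / N : ℂ)‖ = 1 / N := by
      simp [norm_div, Complex.norm_natCast]
    rw [h1]
    have h2 : ‖∑ n ∈ Finset.Icc 1 N, c n * (u n - g n)‖ ≤ ∑ n ∈ Finset.Icc 1 N, ‖c n‖ * δ := by
      refine (norm_sum_le _ _).trans (Finset.sum_le_sum fun n _ => ?_)
      rw [norm_mul]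
      exact mul_le_mul_of_nonneg_left (hg n) (norm_nonneg _)
    calc (1 / N : ℝ) * ‖∑ n ∈ Finset.Icc 1 N, c n * (u n - g n)‖
        ≤ (1 / N : ℝ) * (∑ n ∈ Finset.Icc 1 N, ‖c n‖ * δ) := by
          exact mul_le_mul_of_nonneg_left h2 (by positivity)
      _ = ((1 / N : ℝ) * ∑ n ∈ Finset.Icc 1 N, ‖c n‖) * δ := by
          rw [← Finset.sum_mul]; ring
      _ ≤ C * δ := mul_le_mul_of_nonneg_right (hC N hN2) hδpos.le
  have hCδ : C * δ ≤ ε / 2 := by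
    have heq : δ * (2 * (C + 1)) = ε := by
      rw [hδ]; field_simp
    nlinarith [hδpos.le, hC0]
  calc ‖(1 / N : ℂ) * ∑ n ∈ Finset.Icc 1 N, c n * u n‖
      ≤ ‖(1 / N : ℂ) * ∑ n ∈ Finset.Icc 1 N, c n * u n
          - (1 / N : ℂ) * ∑ n ∈ Finset.Icc 1 N, c n * g n‖
        + ‖(1 / N : ℂ) * ∑ n ∈ Finset.Icc 1 N, c n * g n‖ := by
          simpa using norm_add_le ((1 / N : ℂ) * ∑ n ∈ Finset.Icc 1 N, c n * u n
            - (1 / N : ℂ) * ∑ n ∈ Finset.Icc 1 N, c n * g n)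
            ((1 / N : ℂ) * ∑ n ∈ Finset.Icc 1 N, c n * g n)
    _ < ε := by
        have := key.trans hCδ
        linarith

lemma nilpotent_sq_sub_one {d : ℕ} (A : Matrix (Fin d) (Fin d) ℤ)
    (hEig : A.charpoly = (X - 1) ^ d ∨ A.charpoly = (X + 1) ^ d) :
    ((A.map fun z => (z : ℝ)) ^ 2 - 1) ^ d = 0 := by
  set Ar : Matrix (Fin d) (Fin d) ℝ := A.map fun z => (z : ℝ) with hAr
  have hmap : Ar = (Int.castRingHom ℝ).mapMatrix A := rfl
  have key : (Ar - 1) ^ d = 0 ∨ (Ar + 1) ^ d = 0 := by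
    have hCH := Matrix.aeval_self_charpoly A
    rcases hEig with h | h
    · left
      rw [h] at hCH
      have : (A - 1) ^ d = 0 := by
        simpa [map_pow, map_sub, Polynomial.aeval_X, map_one] using hCH
      calc (Ar - 1) ^ d = (Int.castRingHom ℝ).mapMatrix ((A - 1) ^ d) := by
            rw [map_pow, map_sub, map_one, hmap]
        _ = 0 := by rw [this, map_zero]
    · right
      rw [h] at hCH
      have : (A + 1) ^ d = 0 := by
        simpa [map_pow, map_add, Polynomial.aeval_X, map_one] using hCH
      calc (Ar + 1) ^ d = (Int.castRingHom ℝ).mapMatrix ((A + 1) ^ d) := by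
            rw [map_pow, map_add, map_one, hmap]
        _ = 0 := by rw [this, map_zero]
  have hfact : Ar ^ 2 - 1 = (Ar - 1) * (Ar + 1) := by noncomm_ring
  have hcomm : Commute (Ar - 1) (Ar + 1) := by
    refine Commute.sub_left (Commute.add_right (Commute.refl Ar) (Commute.one_right Ar))
      (Commute.add_right (Commute.one_left Ar) (Commute.refl 1))
  rw [hfact, hcomm.mul_pow]
  rcases key with h | h
  · rw [h, zero_mul]
  · rw [h, mul_zero]

lemma real_fact_zero_lt_one : Fact ((0:ℝ) < 1) := ⟨one_pos⟩

attribute [local instance] real_fact_zero_lt_one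

/-- The character on the `d`-torus with frequency vector `k`. -/
def torusChar {d : ℕ} (k : Fin d → ℤ) : C(Torus d, ℂ) :=
  ∏ i : Fin d, (fourier (k i)).comp ⟨fun x => x i, continuous_apply i⟩

lemma torusChar_apply {d : ℕ} (k : Fin d → ℤ) (x : Torus d) :
    torusChar k x = ∏ i : Fin d, fourier (k i) (x i) := by
  simp [torusChar]

lemma torusChar_add {d : ℕ} (k l : Fin d → ℤ) :
    torusChar (k + l) = torusChar k * torusChar l := by
  ext x
  simp only [torusChar_apply, ContinuousMap.mul_apply, ← Finset.prod_mul_distrib]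
  exact Finset.prod_congr rfl fun i _ => by simpa using (fourier_add (m := k i) (n := l i) (x := x i))

lemma torusChar_zero {d : ℕ} : torusChar (0 : Fin d → ℤ) = 1 := by
  ext x
  simp only [torusChar_apply, Pi.zero_apply, ContinuousMap.one_apply]
  refine Finset.prod_eq_one fun i _ => fourier_zero

lemma torusChar_neg {d : ℕ} (k : Fin d → ℤ) :
    torusChar (-k) = star (torusChar k) := by
  ext x
  simp only [torusChar_apply, ContinuousMap.coe_star, Pi.star_apply, Pi.neg_apply]
  rw [RCLike.star_def, map_prod]
  exact Finset.prod_congr rfl fun i _ => fourier_neg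

/-- The star subalgebra generated by the torus characters. -/
def torusCharSubalgebra (d : ℕ) : StarSubalgebra ℂ C(Torus d, ℂ) where
  toSubalgebra := Algebra.adjoin ℂ (Set.range (torusChar (d := d)))
  star_mem' := by
    show Algebra.adjoin ℂ (Set.range (torusChar (d := d))) ≤
      star (Algebra.adjoin ℂ (Set.range (torusChar (d := d))))
    refine Algebra.adjoin_le ?_
    rintro - ⟨k, rfl⟩
    exact Algebra.subset_adjoin ⟨-k, torusChar_neg k⟩

theorem torusCharSubalgebra_coe (d : ℕ) :
    Subalgebra.toSubmodule (torusCharSubalgebra d).toSubalgebra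
      = Submodule.span ℂ (Set.range (torusChar (d := d))) := by
  apply Algebra.adjoin_eq_span_of_subset
  refine Set.Subset.trans ?_ Submodule.subset_span
  intro x hx
  refine Submonoid.closure_induction (fun _ => id) ⟨0, torusChar_zero⟩ ?_ hx
  rintro - - - - ⟨m, rfl⟩ ⟨n, rfl⟩
  exact ⟨m + n, torusChar_add m n⟩

theorem torusCharSubalgebra_separatesPoints (d : ℕ) :
    (torusCharSubalgebra d).SeparatesPoints := by
  intro x y hxy
  obtain ⟨i, hi⟩ := Function.ne_iff.mp hxy
  refine ⟨_, ⟨torusChar (Pi.single i 1), Algebra.subset_adjoin ⟨_, rfl⟩, rfl⟩, ?_⟩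
  have key : ∀ z : Torus d, torusChar (Pi.single i 1) z = fourier 1 (z i) := by
    intro z
    rw [torusChar_apply]
    rw [Finset.prod_eq_single i]
    · simp
    · intro j _ hj
      rw [Pi.single_eq_of_ne hj]
      exact fourier_zero
    · simp
  dsimp only
  rw [key, key, fourier_one, fourier_one]
  simp only [ne_eq, Subtype.coe_inj]
  intro h
  exact hi (AddCircle.injective_toCircle one_ne_zero (Circle.ext h))

theorem span_torusChar_closure_eq_top (d : ℕ) :
    (Submodule.span ℂ (Set.range (torusChar (d := d)))).topologicalClosure = ⊤ := by
  rw [← torusCharSubalgebra_coe]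
  have := ContinuousMap.starSubalgebra_topologicalClosure_eq_top_of_separatesPoints
    (torusCharSubalgebra d) (torusCharSubalgebra_separatesPoints d)
  exact congr_arg (Subalgebra.toSubmodule <| StarSubalgebra.toSubalgebra ·) this

end Auxiliary

attribute [local instance] real_fact_zero_lt_one

/-- For any `d ≥ 2`, any higher order oscillating sequence of order `d` (stronger version)
is linearly disjoint from every affine distal flow `T x = A x + a` on the `d`-torus, i.e.
`A ∈ GL(d,ℤ)` with all complex eigenvalues equal to 1 (charpoly `(X-1)^d`) or all equal
to -1 (charpoly `(X+1)^d`), and `a ≠ 0`. -/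
theorem higherOrderOscillating_linearlyDisjoint_affineDistal_torus
    (d : ℕ) (hd : 2 ≤ d)
    (c : ℕ → ℂ) (hc : HigherOrderOscillating c d)
    (A : Matrix (Fin d) (Fin d) ℤ) (hA : IsUnit A.det)
    (hEig : A.charpoly = (X - 1) ^ d ∨ A.charpoly = (X + 1) ^ d)
    (a : Torus d) (ha : a ≠ 0) :
    LinearlyDisjoint c (torusAffine A a) := by

  classical
  intro f hf x
  obtain ⟨lam, hlam, K, hK⟩ := hc.1
  obtain ⟨C, hC0, hC⟩ := avg_norm_bound c lam hlam K hK
  set T : Torus d → Torus d := torusAffine A a with hT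
  set Ar : Matrix (Fin d) (Fin d) ℝ := A.map (fun z => (z : ℝ)) with hAr
  -- lifts
  obtain ⟨xl, hxl⟩ : ∃ xl : Fin d → ℝ, ∀ i, ((xl i : ℝ) : AddCircle (1:ℝ)) = x i :=
    ⟨fun i => (QuotientAddGroup.mk_surjective (x i)).choose,
     fun i => (QuotientAddGroup.mk_surjective (x i)).choose_spec⟩
  obtain ⟨al, hal⟩ : ∃ al : Fin d → ℝ, ∀ i, ((al i : ℝ) : AddCircle (1:ℝ)) = a i :=
    ⟨fun i => (QuotientAddGroup.mk_surjective (a i)).choose,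
     fun i => (QuotientAddGroup.mk_surjective (a i)).choose_spec⟩
  -- lifted orbit
  set F : ℕ → Fin d → ℝ := fun n => Nat.rec xl (fun _ v => Ar.mulVec v + al) n with hF
  have hF0 : F 0 = xl := rfl
  have hFsucc : ∀ n, F (n + 1) = Ar.mulVec (F n) + al := fun n => rfl
  have hlift : ∀ n, T^[n] x = fun i => ((F n i : ℝ) : AddCircle (1:ℝ)) := by
    intro n
    induction n with
    | zero =>
      funext i
      rw [Function.iterate_zero_apply, hF0, hxl]
    | succ n ih =>
      rw [Function.iterate_succ_apply', ih]
      funext i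
      show (∑ j, A i j • ((F n j : ℝ) : AddCircle (1:ℝ))) + a i
          = ((F (n+1) i : ℝ) : AddCircle (1:ℝ))
      have h1 : ∀ j, A i j • ((F n j : ℝ) : AddCircle (1:ℝ))
          = (((A i j : ℝ) * F n j : ℝ) : AddCircle (1:ℝ)) := by
        intro j
        rw [← QuotientAddGroup.mk_zsmul, zsmul_eq_mul]
      have h2 : (∑ j, A i j • ((F n j : ℝ) : AddCircle (1:ℝ)))
          = ((∑ j, (A i j : ℝ) * F n j : ℝ) : AddCircle (1:ℝ)) := by
        rw [Finset.sum_congr rfl (fun j _ => h1 j)]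
        exact (map_sum ((QuotientAddGroup.mk' (AddSubgroup.zmultiples (1:ℝ)))) _ _).symm
      rw [h2, ← hal i]
      have h3 : F (n+1) i = (∑ j, (A i j : ℝ) * F n j) + al i := by
        rw [hFsucc n]
        rfl
      rw [h3]
      exact (map_add ((QuotientAddGroup.mk' (AddSubgroup.zmultiples (1:ℝ)))) _ _).symm
  -- parity orbits
  have hd1 : 1 ≤ d := le_trans one_le_two hd
  have hB : ((Ar : Matrix (Fin d) (Fin d) ℝ) ^ 2 - 1) ^ d = 0 := nilpotent_sq_sub_one A hEig
  set G : ℕ → Fin d → ℝ := fun m => F (2 * m) with hG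
  set H : ℕ → Fin d → ℝ := fun m => F (2 * m + 1) with hH
  have hGrec : ∀ m, G (m + 1) = (Ar ^ 2).mulVec (G m) + (Ar.mulVec al + al) := by
    intro m
    have e1 : 2 * (m + 1) = (2 * m + 1) + 1 := by ring
    show F (2 * (m + 1)) = _
    rw [e1, hFsucc (2*m+1), hFsucc (2*m), Matrix.mulVec_add, Matrix.mulVec_mulVec,
      ← add_assoc, pow_two]
  have hHrec : ∀ m, H (m + 1) = (Ar ^ 2).mulVec (H m) + (Ar.mulVec al + al) := by
    intro m
    have e1 : 2 * (m + 1) + 1 = ((2 * m + 1) + 1) + 1 := by ring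
    show F (2 * (m + 1) + 1) = _
    rw [e1, hFsucc (2*m+1+1), hFsucc (2*m+1), Matrix.mulVec_add, Matrix.mulVec_mulVec,
      ← add_assoc, pow_two]
  choose p hpdeg hpev using fun i => affine_orbit_poly hd1 (Ar ^ 2) hB G (Ar.mulVec al + al) hGrec i
  choose q hqdeg hqev using fun i => affine_orbit_poly hd1 (Ar ^ 2) hB H (Ar.mulVec al + al) hHrec i
  -- the "good" predicate
  set Good : C(Torus d, ℂ) → Prop := fun g =>
    Tendsto (fun N : ℕ => (1 / N : ℂ) * ∑ n ∈ Finset.Icc 1 N, c n * g (T^[n] x)) atTop (nhds 0)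
    with hGood
  -- characters are good
  have hchar : ∀ k : Fin d → ℤ, Good (torusChar k) := by
    intro k
    set φ : ℕ → ℝ := fun n => ∑ i, (k i : ℝ) * F n i with hφ
    have hval : ∀ n, (torusChar k) (T^[n] x)
        = Complex.exp (2 * Real.pi * Complex.I * (φ n)) := by
      intro n
      rw [hlift n, torusChar_apply]
      have : ∀ i : Fin d, fourier (k i) (((F n i : ℝ) : AddCircle (1:ℝ)))
          = Complex.exp (2 * Real.pi * Complex.I * ((k i : ℝ) * F n i)) := by
        intro i
        rw [fourier_coe_apply]
        norm_num
        ring_nf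
      rw [Finset.prod_congr rfl (fun i _ => this i), ← Complex.exp_sum]
      congr 1
      rw [← Finset.mul_sum]
      norm_cast
    -- polynomials describing the phase on even/odd integers
    set R0 : Polynomial ℝ := ∑ i, Polynomial.C (k i : ℝ) * p i with hR0
    set R1 : Polynomial ℝ := ∑ i, Polynomial.C (k i : ℝ) * q i with hR1
    set Q0 : Polynomial ℝ := R0.comp (Polynomial.C (2⁻¹ : ℝ) * Polynomial.X) with hQ0
    set Q1 : Polynomial ℝ :=
      R1.comp (Polynomial.C (2⁻¹ : ℝ) * Polynomial.X + Polynomial.C (-2⁻¹ : ℝ)) with hQ1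
    set hpoly : Polynomial ℝ := Polynomial.C (2⁻¹ : ℝ) * Polynomial.X with hhpoly
    have hR0deg : R0.natDegree ≤ d :=
      natDegree_sum_le_of_forall_le _ _ fun i _ =>
        (natDegree_mul_le).trans (by simpa using hpdeg i)
    have hR1deg : R1.natDegree ≤ d :=
      natDegree_sum_le_of_forall_le _ _ fun i _ =>
        (natDegree_mul_le).trans (by simpa using hqdeg i)
    have hlin0 : (Polynomial.C (2⁻¹ : ℝ) * Polynomial.X).natDegree ≤ 1 :=
      le_of_eq (natDegree_C_mul_X _ (by norm_num))
    have hlin1 : (Polynomial.C (2⁻¹ : ℝ) * Polynomial.X + Polynomial.C (-2⁻¹ : ℝ)).natDegree ≤ 1 :=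
      (natDegree_add_le _ _).trans (by simpa using hlin0)
    have hQ0deg : Q0.natDegree ≤ d := by
      refine (natDegree_comp_le).trans ?_
      calc R0.natDegree * (Polynomial.C (2⁻¹ : ℝ) * Polynomial.X).natDegree
          ≤ d * 1 := Nat.mul_le_mul hR0deg hlin0
        _ = d := mul_one d
    have hQ1deg : Q1.natDegree ≤ d := by
      refine (natDegree_comp_le).trans ?_
      calc R1.natDegree * (Polynomial.C (2⁻¹ : ℝ) * Polynomial.X + Polynomial.C (-2⁻¹ : ℝ)).natDegree
          ≤ d * 1 := Nat.mul_le_mul hR1deg hlin1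
        _ = d := mul_one d
    have hhdeg : hpoly.natDegree ≤ 1 := hlin0
    -- evaluation of the phase polynomials
    have hQ0eval : ∀ m : ℕ, Q0.eval ((2 * m : ℕ) : ℝ) = φ (2 * m) := by
      intro m
      rw [hQ0, Polynomial.eval_comp]
      have : (Polynomial.C (2⁻¹ : ℝ) * Polynomial.X).eval ((2 * m : ℕ) : ℝ) = (m : ℝ) := by
        simp only [Polynomial.eval_mul, Polynomial.eval_C, Polynomial.eval_X]
        push_cast
        ring
      rw [this, hR0]
      simp only [Polynomial.eval_finset_sum, Polynomial.eval_mul, Polynomial.eval_C]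
      exact Finset.sum_congr rfl fun i _ => by rw [← hpev i m]
    have hQ1eval : ∀ m : ℕ, Q1.eval ((2 * m + 1 : ℕ) : ℝ) = φ (2 * m + 1) := by
      intro m
      rw [hQ1, Polynomial.eval_comp]
      have : (Polynomial.C (2⁻¹ : ℝ) * Polynomial.X + Polynomial.C (-2⁻¹ : ℝ)).eval
          ((2 * m + 1 : ℕ) : ℝ) = (m : ℝ) := by
        simp only [Polynomial.eval_add, Polynomial.eval_mul, Polynomial.eval_C, Polynomial.eval_X]
        push_cast
        ring
      rw [this, hR1]
      simp only [Polynomial.eval_finset_sum, Polynomial.eval_mul, Polynomial.eval_C]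
      exact Finset.sum_congr rfl fun i _ => by rw [← hqev i m]
    -- exp of the half-integer shift
    have hexp_shift : ∀ (Q : Polynomial ℝ) (n : ℕ),
        Complex.exp (2 * Real.pi * Complex.I * ((Q + hpoly).eval (n : ℝ)))
          = Complex.exp (2 * Real.pi * Complex.I * (Q.eval (n : ℝ)))
            * Complex.exp (Real.pi * Complex.I * n) := by
      intro Q n
      rw [Polynomial.eval_add, ← Complex.exp_add]
      congr 1
      rw [hhpoly]
      simp only [Polynomial.eval_mul, Polynomial.eval_C, Polynomial.eval_X]
      push_cast
      ring
    have hexp_even : ∀ m : ℕ, Complex.exp (Real.pi * Complex.I * ((2 * m : ℕ) : ℂ)) = 1 := by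
      intro m
      have : (Real.pi : ℂ) * Complex.I * ((2 * m : ℕ) : ℂ) = (m : ℤ) * (2 * Real.pi * Complex.I) := by
        push_cast
        ring
      rw [this, Complex.exp_int_mul_two_pi_mul_I]
    have hexp_odd : ∀ m : ℕ, Complex.exp (Real.pi * Complex.I * ((2 * m + 1 : ℕ) : ℂ)) = -1 := by
      intro m
      have : (Real.pi : ℂ) * Complex.I * ((2 * m + 1 : ℕ) : ℂ)
          = (m : ℤ) * (2 * Real.pi * Complex.I) + Real.pi * Complex.I := by
        push_cast
        ring
      rw [this, Complex.exp_add, Complex.exp_int_mul_two_pi_mul_I, Complex.exp_pi_mul_I]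
      ring
    -- the four tendsto statements
    have hT1 := hc.2 Q0 (natDegree_le_iff_degree_le.mp hQ0deg)
    have hT2 := hc.2 (Q0 + hpoly) ((natDegree_le_iff_degree_le.mp
      ((natDegree_add_le _ _).trans (by simp only [max_le_iff]; exact ⟨hQ0deg, hhdeg.trans hd1⟩))))
    have hT3 := hc.2 Q1 (natDegree_le_iff_degree_le.mp hQ1deg)
    have hT4 := hc.2 (Q1 + hpoly) ((natDegree_le_iff_degree_le.mp
      ((natDegree_add_le _ _).trans (by simp only [max_le_iff]; exact ⟨hQ1deg, hhdeg.trans hd1⟩))))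
    -- pointwise decomposition
    have hterm : ∀ n : ℕ, c n * (torusChar k) (T^[n] x)
        = (2⁻¹ : ℂ) * (c n * Complex.exp (2 * Real.pi * Complex.I * (Q0.eval (n : ℝ))))
          + (2⁻¹ : ℂ) * (c n * Complex.exp (2 * Real.pi * Complex.I * ((Q0 + hpoly).eval (n : ℝ))))
          + ((2⁻¹ : ℂ) * (c n * Complex.exp (2 * Real.pi * Complex.I * (Q1.eval (n : ℝ))))
            - (2⁻¹ : ℂ) * (c n * Complex.exp (2 * Real.pi * Complex.I * ((Q1 + hpoly).eval (n : ℝ))))) := by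
      intro n
      rw [hval n]
      rcases Nat.even_or_odd n with he | ho
      · obtain ⟨m, hm⟩ := he
        have hn : n = 2 * m := by omega
        subst hn
        rw [hexp_shift Q0, hexp_shift Q1, hexp_even m, hQ0eval m]
        ring
      · obtain ⟨m, hm⟩ := ho
        subst hm
        rw [hexp_shift Q0, hexp_shift Q1, hexp_odd m, hQ1eval m]
        ring
    -- combine
    have hcomb := ((hT1.const_mul (2⁻¹ : ℂ)).add (hT2.const_mul (2⁻¹ : ℂ))).add
      ((hT3.const_mul (2⁻¹ : ℂ)).sub (hT4.const_mul (2⁻¹ : ℂ)))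
    simp only [mul_zero, add_zero, sub_zero, zero_add, sub_self] at hcomb
    rw [hGood]
    convert hcomb using 2 with N
    rw [Finset.sum_congr rfl (fun n _ => hterm n)]
    rw [Finset.sum_add_distrib, Finset.sum_sub_distrib, Finset.sum_add_distrib,
      ← Finset.mul_sum, ← Finset.mul_sum, ← Finset.mul_sum, ← Finset.mul_sum]
    ring
  -- span of characters is good
  have hspan : ∀ g : C(Torus d, ℂ), g ∈ Submodule.span ℂ (Set.range (torusChar (d := d))) → Good g := by
    intro g hg
    induction hg using Submodule.span_induction with
    | mem g hgm =>
      obtain ⟨k, rfl⟩ := hgm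
      exact hchar k
    | zero =>
      rw [hGood]
      simpa using tendsto_const_nhds (α := ℂ) (x := 0) (f := atTop (α := ℕ))
    | add g₁ g₂ _ _ h₁ h₂ =>
      rw [hGood]
      have := Filter.Tendsto.add h₁ h₂
      rw [add_zero] at this
      convert this using 2 with N
      rw [← mul_add, ← Finset.sum_add_distrib]
      congr 1
      refine Finset.sum_congr rfl fun n _ => ?_
      simp only [ContinuousMap.add_apply]
      ring
    | smul z g₁ _ h₁ =>
      rw [hGood]
      have := h₁.const_mul z
      rw [mul_zero] at this
      convert this using 2 with N
      simp only [ContinuousMap.smul_apply, smul_eq_mul]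
      rw [Finset.sum_congr rfl (fun n (_ : n ∈ Finset.Icc 1 N) => by ring :
        ∀ n ∈ Finset.Icc 1 N, c n * (z * g₁ (T^[n] x)) = z * (c n * g₁ (T^[n] x))),
        ← Finset.mul_sum]
      ring
  -- approximation
  refine tendsto_avg_of_approx c C hC _ fun ε hε => ?_
  set fc : C(Torus d, ℂ) := ⟨f, hf⟩ with hfc
  have hmem : fc ∈ closure ((Submodule.span ℂ (Set.range (torusChar (d := d)))) : Set C(Torus d, ℂ)) := by
    have h := span_torusChar_closure_eq_top d
    have : fc ∈ (Submodule.span ℂ (Set.range (torusChar (d := d)))).topologicalClosure := by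
      rw [h]; trivial
    exact this
  obtain ⟨g, hgmem, hgdist⟩ := Metric.mem_closure_iff.mp hmem ε hε
  refine ⟨fun n => g (T^[n] x), fun n => ?_, hspan g hgmem⟩
  have : ‖f (T^[n] x) - g (T^[n] x)‖ = ‖(fc - g) (T^[n] x)‖ := by
    simp [hfc]
  rw [this]
  calc ‖(fc - g) (T^[n] x)‖ ≤ ‖fc - g‖ := ContinuousMap.norm_coe_le_norm _ _
    _ = dist fc g := (dist_eq_norm fc g).symm
    _ ≤ ε := hgdist.le
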